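/- Let T ≥ μ > 0, let a < b be real numbers, and let α ∈ G(T,μ). Define A : ℝ → ℝ by A(τ) = ∫_{τ+a}^{τ+b} α(s) ds. Then A is 1-Lipschitz continuous, and for every t ∈ ℝ one has ∫_t^{t+T} A(τ) dτ ≥ μ (b − a). -/

import Mathlib

open MeasureTheory

def PEsignal (T μ : ℝ) (α : ℝ → ℝ) : Prop :=
  Measurable α ∧ (∀ s, α s ∈ Set.Icc (0:ℝ) 1) ∧ ∀ t : ℝ, μ ≤ ∫ s in t..(t + T), α s

/-- For a persistently exciting signal `α`, the function `A(τ) = ∫_{τ+a}^{τ+b} α`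
is `1`-Lipschitz and satisfies `∫_t^{t+T} A(τ) dτ ≥ μ (b - a)` for every `t`. -/
theorem stmt16 (T μ : ℝ) (hμ : 0 < μ) (hTμ : μ ≤ T) (a b : ℝ) (hab : a < b)
    (α : ℝ → ℝ) (hα : PEsignal T μ α) :
    LipschitzWith 1 (fun τ : ℝ => ∫ s in (τ + a)..(τ + b), α s) ∧
    ∀ t : ℝ, μ * (b - a) ≤ ∫ τ in t..(t + T), ∫ s in (τ + a)..(τ + b), α s := by
  obtain ⟨hmeas, hbd, hPE⟩ := hα
  have habs : ∀ s, |α s| ≤ 1 := fun s => by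
    have := hbd s; rw [abs_le]; constructor <;> [linarith [this.1]; exact this.2]
  -- interval integrability
  have hint : ∀ x y : ℝ, IntervalIntegrable α volume x y := by
    intro x y
    rw [intervalIntegrable_iff]
    exact Measure.integrableOn_of_bounded (measure_Ioc_lt_top.ne)
      hmeas.aestronglyMeasurable (ae_of_all _ fun s => habs s)
  have hnonneg : ∀ x y : ℝ, x ≤ y → 0 ≤ ∫ s in x..y, α s := fun x y hxy =>
    intervalIntegral.integral_nonneg hxy fun s _ => (hbd s).1
  have hupper : ∀ x y : ℝ, x ≤ y → (∫ s in x..y, α s) ≤ y - x := by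
    intro x y hxy
    have := intervalIntegral.integral_mono_on hxy (hint x y)
      (intervalIntegrable_const (c := (1:ℝ))) (fun s _ => (hbd s).2)
    simpa using this
  have hT : 0 < T := lt_of_lt_of_le hμ hTμ
  constructor
  · -- Lipschitz
    apply LipschitzWith.of_dist_le_mul
    have key : ∀ τ' τ : ℝ, τ' ≤ τ →
        |(∫ s in (τ + a)..(τ + b), α s) - ∫ s in (τ' + a)..(τ' + b), α s| ≤ τ - τ' := by
      intro τ' τ hle
      have h1 : (∫ s in (τ' + a)..(τ' + b), α s) + ∫ s in (τ' + b)..(τ + b), α s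
          = ∫ s in (τ' + a)..(τ + b), α s :=
        intervalIntegral.integral_add_adjacent_intervals (hint _ _) (hint _ _)
      have h2 : (∫ s in (τ' + a)..(τ + a), α s) + ∫ s in (τ + a)..(τ + b), α s
          = ∫ s in (τ' + a)..(τ + b), α s :=
        intervalIntegral.integral_add_adjacent_intervals (hint _ _) (hint _ _)
      have hb1 : 0 ≤ ∫ s in (τ' + b)..(τ + b), α s := hnonneg _ _ (by linarith)
      have hb2 : (∫ s in (τ' + b)..(τ + b), α s) ≤ τ - τ' := by
        have := hupper (τ' + b) (τ + b) (by linarith); linarith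
      have ha1 : 0 ≤ ∫ s in (τ' + a)..(τ + a), α s := hnonneg _ _ (by linarith)
      have ha2 : (∫ s in (τ' + a)..(τ + a), α s) ≤ τ - τ' := by
        have := hupper (τ' + a) (τ + a) (by linarith); linarith
      rw [abs_le]
      constructor <;> linarith
    intro τ τ'
    simp only [Real.dist_eq, NNReal.coe_one, one_mul]
    rcases le_total τ' τ with h | h
    · calc |(∫ s in (τ + a)..(τ + b), α s) - ∫ s in (τ' + a)..(τ' + b), α s| ≤ τ - τ' :=
            key τ' τ h
        _ ≤ |τ - τ'| := le_abs_self _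
    · rw [abs_sub_comm]
      calc |(∫ s in (τ' + a)..(τ' + b), α s) - ∫ s in (τ + a)..(τ + b), α s| ≤ τ' - τ :=
            key τ τ' h
        _ = -(τ - τ') := by ring
        _ ≤ |τ - τ'| := neg_le_abs _
  · -- integral lower bound
    intro t
    have hstep : ∀ τ : ℝ, (∫ s in (τ + a)..(τ + b), α s) = ∫ r in a..b, α (τ + r) := by
      intro τ
      exact (intervalIntegral.integral_comp_add_left α τ).symm
    have hIoc : ∀ τ : ℝ, (∫ r in a..b, α (τ + r)) = ∫ r in Set.Ioc a b, α (τ + r) := by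
      intro τ
      rw [intervalIntegral.integral_of_le hab.le]
    -- integrability of the product function
    have hF : Integrable (Function.uncurry (fun τ r => α (τ + r)))
        ((volume.restrict (Set.Ioc t (t + T))).prod (volume.restrict (Set.Ioc a b))) := by
      rw [Measure.prod_restrict]
      apply Measure.integrableOn_of_bounded
      · rw [Measure.prod_prod]
        exact ENNReal.mul_ne_top measure_Ioc_lt_top.ne measure_Ioc_lt_top.ne
      · exact (hmeas.comp measurable_add).aestronglyMeasurable
      · exact ae_of_all _ fun p => habs _
    have hswap := integral_integral_swap hF
    have hTle : t ≤ t + T := by linarith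
    calc μ * (b - a)
        ≤ ∫ r in Set.Ioc a b, ∫ τ in Set.Ioc t (t + T), α (τ + r) := by
          have hInt : IntegrableOn (fun r => ∫ τ in Set.Ioc t (t + T), α (τ + r))
              (Set.Ioc a b) volume := by
            simpa [Function.uncurry, IntegrableOn] using hF.integral_prod_right
          have := setIntegral_ge_of_const_le_real (c := μ) (measurableSet_Ioc)
            (measure_Ioc_lt_top.ne) (fun r _ => ?_) hInt
          · rwa [Real.volume_real_Ioc_of_le hab.le] at this
          · -- μ ≤ ∫ τ in Ioc t (t+T), α (τ + r)
            have : (∫ τ in Set.Ioc t (t + T), α (τ + r)) = ∫ τ in t..(t + T), α (τ + r) :=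
              (intervalIntegral.integral_of_le hTle).symm
            rw [this, intervalIntegral.integral_comp_add_right α r]
            have := hPE (t + r)
            have heq : t + r + T = t + T + r := by ring
            rwa [heq] at this
      _ = ∫ τ in Set.Ioc t (t + T), ∫ r in Set.Ioc a b, α (τ + r) := hswap.symm
      _ = ∫ τ in t..(t + T), ∫ s in (τ + a)..(τ + b), α s := by
          rw [intervalIntegral.integral_of_le hTle]
          apply setIntegral_congr_fun measurableSet_Ioc
          intro τ _
          show (∫ r in Set.Ioc a b, α (τ + r)) = ∫ s in (τ + a)..(τ + b), α s
          rw [hstep τ, hIoc τ]
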